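/- Soundness of the IMC-relaxed fixed-policy recursion: define γ̄_{H,i} = sup_{x ∈ X_i} 1_{X_u}(x) and γ̄_{k,i} = sup_{t ∈ F^i_k} Σ_{j=1}^{n_p+1} γ̄_{k+1,j} t_j for i ≤ n_p, where F^i_k = { t ∈ [0,1]^{n_p+1} : inf_{x ∈ X_i} T_k(X_j | x) ≤ t_j ≤ sup_{x ∈ X_i} T_k(X_j | x) for all j, Σ_j t_j = 1 }, and γ̄_{k,n_p+1} = 1 for all k < H; set γ̄_k(x) := γ̄_{k,i} for x ∈ X_i. Then V_k(x) ≤ γ̄_k(x) for every k ∈ {0, …, H} and x ∈ X, so 1 − γ̄_0(x_0) is a lower bound on the probabilistic safety 1 − V_0(x_0). -/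

import Mathlib

open MeasureTheory ProbabilityTheory

/-- **Soundness of the IMC-relaxed fixed-policy recursion:** with
`γ̄_{H,i} = sup_{x ∈ X_i} 1_{X_u}(x)`,
`γ̄_{k,i} = sup_{t ∈ F^i_k} Σ_j γ̄_{k+1,j} t_j` for `i ≤ n_p`, and
`γ̄_{k,n_p+1} = 1` for `k < H`, it holds that `V_k(x) ≤ γ̄_k(x)` for every
`k ∈ {0,…,H}` and `x ∈ X`, so `1 - γ̄_0(x₀)` is a lower bound on the
probabilistic safety `1 - V_0(x₀)`. -/
theorem imc_relaxed_recursion_sound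
    {X : Type*} [MeasurableSpace X] [StandardBorelSpace X]
    -- the partition `X_1, …, X_{n_p}, X_{n_p+1}` of `X`
    (np : ℕ) (P : Fin (np + 1) → Set X)
    (hPmeas : ∀ i, MeasurableSet (P i))
    (hPne : ∀ i, (P i).Nonempty)
    (hPdisj : Pairwise (Function.onFun Disjoint P))
    (hPcover : ⋃ i, P i = Set.univ)
    -- unsafe region `X_u = X_{n_p+1}` and safe set `X_s`
    (Xu Xs : Set X)
    (hXu : Xu = P (Fin.last np))
    (hXs : Xs = Set.univ \ Xu)
    -- horizon and closed-loop Markov kernels under the fixed policy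
    (H : ℕ)
    (T : ℕ → Kernel X X)
    (hT : ∀ k, IsMarkovKernel (T k))
    -- unsafety value functions `V_k`
    (V : ℕ → X → ℝ)
    (hVH : ∀ x, V H x = Xu.indicator (fun _ => (1 : ℝ)) x)
    (hVk : ∀ k < H, ∀ x,
      V k x = Xu.indicator (fun _ => (1 : ℝ)) x +
        Xs.indicator (fun _ => (1 : ℝ)) x * ∫ y, V (k + 1) y ∂((T k) x))
    -- the interval feasible sets `F^i_k`
    (Fset : ℕ → Fin (np + 1) → Set (Fin (np + 1) → ℝ))
    (hFset : ∀ k < H, ∀ i : Fin (np + 1), i ≠ Fin.last np →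
      Fset k i = {t | (∀ j, t j ∈ Set.Icc (0 : ℝ) 1) ∧
        (∀ j, (⨅ x : P i, ((T k) (x : X) (P j)).toReal) ≤ t j ∧
          t j ≤ ⨆ x : P i, ((T k) (x : X) (P j)).toReal) ∧
        ∑ j, t j = 1})
    -- the IMC values `γ̄_{k,i}`
    (γ : ℕ → Fin (np + 1) → ℝ)
    (hγH : ∀ i, γ H i = ⨆ x : P i, Xu.indicator (fun _ => (1 : ℝ)) (x : X))
    (hγk : ∀ k < H, ∀ i : Fin (np + 1), i ≠ Fin.last np → γ k i =
      ⨆ t : Fset k i, ∑ j, γ (k + 1) j * (t : Fin (np + 1) → ℝ) j)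
    (hγlast : ∀ k < H, γ k (Fin.last np) = 1)
    -- the piecewise-constant function `γ̄_k(x) = γ̄_{k,i}` for `x ∈ X_i`
    (γfun : ℕ → X → ℝ)
    (hγfun : ∀ k, ∀ x, ∀ i : Fin (np + 1), x ∈ P i → γfun k x = γ k i) :
    (∀ k ≤ H, ∀ x : X, V k x ≤ γfun k x) ∧
      ∀ x0 : X, 1 - γfun 0 x0 ≤ 1 - V 0 x0 := by
  classical
  have hmem : ∀ x : X, ∃ i, x ∈ P i := by
    intro x
    have hx : x ∈ ⋃ i, P i := by rw [hPcover]; trivial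
    simpa using hx
  have hXuMeas : MeasurableSet Xu := hXu ▸ hPmeas _
  have hXsMeas : MeasurableSet Xs := hXs ▸ MeasurableSet.univ.diff hXuMeas
  have key : ∀ m k, k + m = H →
      Measurable (V k) ∧ (∀ x, V k x ∈ Set.Icc (0:ℝ) 1) ∧ (∀ x, V k x ≤ γfun k x) := by
    intro m
    induction m with
    | zero =>
      intro k hk
      have hkH : k = H := by omega
      subst hkH
      have hVeq : V k = Xu.indicator (fun _ => (1:ℝ)) := funext hVH
      refine ⟨hVeq ▸ measurable_const.indicator hXuMeas, ?_, ?_⟩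
      · intro x
        rw [hVH x]
        by_cases hx : x ∈ Xu
        · simp [Set.indicator_of_mem hx]
        · simp [Set.indicator_of_notMem hx]
      · intro x
        obtain ⟨i, hxi⟩ := hmem x
        rw [hγfun k x i hxi, hγH i, hVH x]
        have hbdd : BddAbove (Set.range fun x' : P i =>
            Xu.indicator (fun _ => (1:ℝ)) (x' : X)) := by
          refine ⟨1, ?_⟩
          rintro r ⟨x', rfl⟩
          by_cases hx' : (x' : X) ∈ Xu
          · simp [Set.indicator_of_mem hx']
          · simp [Set.indicator_of_notMem hx']
        exact le_ciSup hbdd (⟨x, hxi⟩ : P i)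
    | succ m ih =>
      intro k hk
      have hkH : k < H := by omega
      obtain ⟨hmeas1, hbd1, hle1⟩ := ih (k + 1) (by omega)
      haveI := hT k
      -- integrability of V (k+1)
      have hint : ∀ x : X, Integrable (V (k + 1)) ((T k) x) := by
        intro x
        refine (integrable_const (1:ℝ)).mono' hmeas1.aestronglyMeasurable ?_
        filter_upwards with y
        rw [Real.norm_eq_abs, abs_le]
        exact ⟨by linarith [(hbd1 y).1], (hbd1 y).2⟩
      -- the integral lies in [0,1]
      have hIbd : ∀ x : X, (∫ y, V (k + 1) y ∂((T k) x)) ∈ Set.Icc (0:ℝ) 1 := by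
        intro x
        constructor
        · exact integral_nonneg fun y => (hbd1 y).1
        · calc (∫ y, V (k + 1) y ∂((T k) x)) ≤ ∫ _, (1:ℝ) ∂((T k) x) :=
              integral_mono (hint x) (integrable_const 1) fun y => (hbd1 y).2
            _ = 1 := by simp
      -- measurability of V k
      have hVeq : V k = fun x => Xu.indicator (fun _ => (1:ℝ)) x +
          Xs.indicator (fun _ => (1:ℝ)) x * ∫ y, V (k + 1) y ∂((T k) x) :=
        funext (hVk k hkH)
      have hImeas : Measurable fun x => ∫ y, V (k + 1) y ∂((T k) x) := by
        have := MeasureTheory.StronglyMeasurable.integral_kernel_prod_right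
          (κ := T k) (f := fun _ y => V (k + 1) y)
          (hmeas1.stronglyMeasurable.comp_measurable measurable_snd)
        exact this.measurable
      have hmeasK : Measurable (V k) := by
        rw [hVeq]
        exact (measurable_const.indicator hXuMeas).add
          ((measurable_const.indicator hXsMeas).mul hImeas)
      -- bounds of V k
      have hbdK : ∀ x, V k x ∈ Set.Icc (0:ℝ) 1 := by
        intro x
        rw [hVk k hkH x]
        by_cases hx : x ∈ Xu
        · have hxs : x ∉ Xs := by rw [hXs]; simp [hx]
          simp [Set.indicator_of_mem hx, Set.indicator_of_notMem hxs]
        · have hxs : x ∈ Xs := by rw [hXs]; exact ⟨trivial, hx⟩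
          simpa [Set.indicator_of_notMem hx, Set.indicator_of_mem hxs] using hIbd x
      refine ⟨hmeasK, hbdK, ?_⟩
      intro x
      obtain ⟨i, hxi⟩ := hmem x
      rw [hγfun k x i hxi]
      by_cases hi : i = Fin.last np
      · subst hi
        have hx : x ∈ Xu := hXu ▸ hxi
        have hxs : x ∉ Xs := by rw [hXs]; simp [hx]
        rw [hγlast k hkH, hVk k hkH x]
        simp [Set.indicator_of_mem hx, Set.indicator_of_notMem hxs]
      · -- x is in a safe piece
        have hxu : x ∉ Xu := by
          intro hx
          exact Set.disjoint_left.1 (hPdisj hi) hxi (hXu ▸ hx)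
        have hxs : x ∈ Xs := by rw [hXs]; exact ⟨trivial, hxu⟩
        have hVkx : V k x = ∫ y, V (k + 1) y ∂((T k) x) := by
          rw [hVk k hkH x]
          simp [Set.indicator_of_notMem hxu, Set.indicator_of_mem hxs]
        -- γfun (k+1) as a simple function
        set g : X → ℝ := fun y => ∑ j, γ (k + 1) j * (P j).indicator (fun _ => (1:ℝ)) y
          with hg_def
        have hg : ∀ y, γfun (k + 1) y = g y := by
          intro y
          obtain ⟨j0, hy⟩ := hmem y
          have hsum : ∑ j, γ (k + 1) j * (P j).indicator (fun _ => (1:ℝ)) y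
              = γ (k + 1) j0 := by
            rw [Finset.sum_eq_single j0]
            · simp [Set.indicator_of_mem hy]
            · intro j _ hj
              have hyj : y ∉ P j := fun hyj =>
                Set.disjoint_left.1 (hPdisj hj) hyj hy
              simp [Set.indicator_of_notMem hyj]
            · simp
          rw [hγfun (k + 1) y j0 hy, hg_def]
          exact hsum.symm
        have hgint : Integrable g ((T k) x) := by
          refine integrable_finset_sum _ fun j _ => ?_
          exact ((integrable_const (1:ℝ)).indicator (hPmeas j)).const_mul _
        have hIle : (∫ y, V (k + 1) y ∂((T k) x)) ≤ ∫ y, g y ∂((T k) x) :=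
          integral_mono (hint x) hgint fun y => (hle1 y).trans_eq (hg y)
        -- compute ∫ g
        set t : Fin (np + 1) → ℝ := fun j => (((T k) x) (P j)).toReal with ht_def
        have hIg : (∫ y, g y ∂((T k) x)) = ∑ j, γ (k + 1) j * t j := by
          rw [hg_def]
          rw [integral_finset_sum _ fun j _ =>
            ((integrable_const (1:ℝ)).indicator (hPmeas j)).const_mul _]
          refine Finset.sum_congr rfl fun j _ => ?_
          rw [integral_const_mul, integral_indicator_const _ (hPmeas j)]
          simp [ht_def, measureReal_def]
        -- t belongs to the feasible set
        have htIcc : ∀ j, t j ∈ Set.Icc (0:ℝ) 1 := by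
          intro j
          refine ⟨ENNReal.toReal_nonneg, ?_⟩
          have h1 : ((T k) x) (P j) ≤ 1 := prob_le_one
          calc (((T k) x) (P j)).toReal ≤ (1 : ENNReal).toReal :=
              ENNReal.toReal_mono ENNReal.one_ne_top h1
            _ = 1 := by simp
        have htF : t ∈ Fset k i := by
          rw [hFset k hkH i hi]
          refine ⟨htIcc, ?_, ?_⟩
          · intro j
            have hbb : BddBelow (Set.range fun x' : P i => (((T k) (x' : X)) (P j)).toReal) :=
              ⟨0, by rintro r ⟨x', rfl⟩; exact ENNReal.toReal_nonneg⟩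
            have hba : BddAbove (Set.range fun x' : P i => (((T k) (x' : X)) (P j)).toReal) := by
              refine ⟨1, ?_⟩
              rintro r ⟨x', rfl⟩
              have h1 : ((T k) (x' : X)) (P j) ≤ 1 := prob_le_one
              calc (((T k) (x' : X)) (P j)).toReal ≤ (1 : ENNReal).toReal :=
                  ENNReal.toReal_mono ENNReal.one_ne_top h1
                _ = 1 := by simp
            exact ⟨ciInf_le hbb (⟨x, hxi⟩ : P i), le_ciSup hba (⟨x, hxi⟩ : P i)⟩
          · have hsum : ∑ j, ((T k) x) (P j) = 1 := by
              have := measure_iUnion (μ := (T k) x) hPdisj hPmeas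
              rw [hPcover] at this
              rw [← tsum_fintype (L := SummationFilter.unconditional _), ← this, measure_univ]
            calc ∑ j, t j = (∑ j, ((T k) x) (P j)).toReal := by
                  rw [ENNReal.toReal_sum fun j _ => measure_ne_top _ _]
              _ = 1 := by rw [hsum]; simp
        -- conclude via the sup over the feasible set
        have hγki : γ k i = ⨆ t' : Fset k i, ∑ j, γ (k + 1) j * (t' : Fin (np + 1) → ℝ) j :=
          hγk k hkH i hi
        have hba2 : BddAbove (Set.range fun t' : Fset k i =>
            ∑ j, γ (k + 1) j * (t' : Fin (np + 1) → ℝ) j) := by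
          refine ⟨∑ j, |γ (k + 1) j|, ?_⟩
          rintro r ⟨⟨t', ht'⟩, rfl⟩
          rw [hFset k hkH i hi] at ht'
          calc ∑ j, γ (k + 1) j * t' j ≤ ∑ j, |γ (k + 1) j * t' j| :=
              Finset.sum_le_sum fun j _ => le_abs_self _
            _ ≤ ∑ j, |γ (k + 1) j| := by
              refine Finset.sum_le_sum fun j _ => ?_
              rw [abs_mul]
              have h1 : |t' j| ≤ 1 := abs_le.2 ⟨by linarith [(ht'.1 j).1], (ht'.1 j).2⟩
              calc |γ (k + 1) j| * |t' j| ≤ |γ (k + 1) j| * 1 :=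
                  mul_le_mul_of_nonneg_left h1 (abs_nonneg _)
                _ = |γ (k + 1) j| := mul_one _
        calc V k x = ∫ y, V (k + 1) y ∂((T k) x) := hVkx
          _ ≤ ∫ y, g y ∂((T k) x) := hIle
          _ = ∑ j, γ (k + 1) j * t j := hIg
          _ ≤ γ k i := by
              rw [hγki]
              exact le_ciSup hba2 (⟨t, htF⟩ : Fset k i)
  refine ⟨fun k hk x => (key (H - k) k (by omega)).2.2 x, fun x0 => ?_⟩
  have := (key H 0 (by omega)).2.2 x0
  linarith
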